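/- Under the setting of the previous statement with restriction on a single equation i: R_i vec(e_i'[B A]) = u_i with R_i ∈ ℝ^{r×(n+m)}, the i-th row of every (B̃,Ã) ∈ Ω^R with B̃⁻¹Ã = B⁻¹A equals the i-th row of (B,A) if and only if M_i = [P'; R_i] has full column rank n+m. -/

import Mathlib

open Matrix

/-- `C` is canonical quasi-lower triangular. -/
def QLT {n m : ℕ} (C : Matrix (Fin n) (Fin m) ℝ) : Prop :=
  ∃ idx : Fin m → Fin n, StrictMono idx ∧
    ∀ j : Fin m, 0 < C (idx j) j ∧ ∀ i : Fin n, i < idx j → C i j = 0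

lemma auxRankInj {k l : Type} [Fintype k] [Fintype l] [DecidableEq l] (M : Matrix k l ℝ) :
    M.rank = Fintype.card l ↔ Function.Injective M.mulVec := by
  have h := LinearMap.finrank_range_add_finrank_ker M.mulVecLin
  rw [Module.finrank_fintype_fun_eq_card] at h
  rw [Matrix.rank]
  constructor
  · intro hr
    have : Module.finrank ℝ (LinearMap.ker M.mulVecLin) = 0 := by omega
    have hker : LinearMap.ker M.mulVecLin = ⊥ := Submodule.finrank_eq_zero.mp this
    have := LinearMap.ker_eq_bot.mp hker
    exact this
  · intro hinj
    have hker : LinearMap.ker M.mulVecLin = ⊥ := LinearMap.ker_eq_bot.mpr (by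
      exact hinj)
    rw [hker] at h
    simpa using h

lemma auxPmul {n m : ℕ} (C : Matrix (Fin n) (Fin m) ℝ) (x : Fin n → ℝ) (y : Fin m → ℝ) :
    (Matrix.fromRows (-C) (1 : Matrix (Fin m) (Fin m) ℝ))ᵀ *ᵥ (Sum.elim x y)
      = -(Cᵀ *ᵥ x) + y := by
  rw [transpose_fromRows, fromCols_mulVec_sumElim]
  simp [Matrix.neg_mulVec]

lemma auxRow {n m : ℕ} (Bt : Matrix (Fin n) (Fin n) ℝ) (C : Matrix (Fin n) (Fin m) ℝ)
    (i : Fin n) : (Bt * C) i = Cᵀ *ᵥ (Bt i) := by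
  funext j
  simp [Matrix.mul_apply, Matrix.mulVec, dotProduct, mul_comm]

lemma auxCol {n m k : ℕ} (B : Matrix (Fin n) (Fin k) ℝ) (A : Matrix (Fin n) (Fin m) ℝ)
    (i : Fin n) : (fromCols B A) i = Sum.elim (B i) (A i) := by
  funext x; cases x <;> simp

/-- Identification of the `i`-th equation by affine restrictions
`R_i vec(e_i'[B A]) = u_i`: with `C = B⁻¹A` and `P = [-C ; I_m]`, every `(B̃,Ã)` in the
restricted parameter space with `B̃⁻¹Ã = B⁻¹A` has the same `i`-th row of `[B̃ Ã]` as
`(B,A)` iff `M_i = [P' ; R_i]` has full column rank `n + m`. -/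
theorem stmt16 {n m r : ℕ} (i : Fin n)
    (Ri : Matrix (Fin r) (Fin n ⊕ Fin m) ℝ) (ui : Fin r → ℝ)
    (B : Matrix (Fin n) (Fin n) ℝ) (A : Matrix (Fin n) (Fin m) ℝ)
    (hB : IsUnit B) (hrank : (B⁻¹ * A).rank = m) (hq : QLT (B⁻¹ * A))
    (hres : Ri.mulVec ((Matrix.fromCols B A) i) = ui) :
    (∀ (Bt : Matrix (Fin n) (Fin n) ℝ) (At : Matrix (Fin n) (Fin m) ℝ),
        IsUnit Bt → (Bt⁻¹ * At).rank = m → QLT (Bt⁻¹ * At) →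
        Ri.mulVec ((Matrix.fromCols Bt At) i) = ui →
        Bt⁻¹ * At = B⁻¹ * A →
        (Matrix.fromCols Bt At) i = (Matrix.fromCols B A) i) ↔
      (Matrix.fromRows
        ((Matrix.fromRows (-(B⁻¹ * A)) (1 : Matrix (Fin m) (Fin m) ℝ))ᵀ) Ri).rank
        = n + m := by
  set C : Matrix (Fin n) (Fin m) ℝ := B⁻¹ * A with hC
  set P : Matrix (Fin n ⊕ Fin m) (Fin m) ℝ := Matrix.fromRows (-C) 1 with hP
  set M : Matrix (Fin m ⊕ Fin r) (Fin n ⊕ Fin m) ℝ := Matrix.fromRows Pᵀ Ri with hM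
  have hBdet : IsUnit B.det := (Matrix.isUnit_iff_isUnit_det B).mp hB
  have hA : B * C = A := by
    rw [hC, Matrix.mul_nonsing_inv_cancel_left _ _ hBdet]
  have hcard : n + m = Fintype.card (Fin n ⊕ Fin m) := by simp
  rw [hcard, auxRankInj]
  constructor
  · -- identification → injective
    intro hid
    rw [Function.Injective]
    by_contra hni
    push_neg at hni
    obtain ⟨a, b, hab, hne⟩ := hni
    set d : Fin n ⊕ Fin m → ℝ := a - b with hd
    have hd0 : d ≠ 0 := sub_ne_zero.mpr hne
    have hMd : M *ᵥ d = 0 := by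
      rw [hd, Matrix.mulVec_sub, hab, sub_self]
    set v : Fin n → ℝ := fun k => d (Sum.inl k) with hv
    set w : Fin m → ℝ := fun k => d (Sum.inr k) with hw
    have hdel : d = Sum.elim v w := by funext x; cases x <;> rfl
    have hPd : Pᵀ *ᵥ d = 0 := by
      have := congrFun hMd
      funext j
      have h1 := this (Sum.inl j)
      rw [hM, Matrix.fromRows_mulVec] at h1
      simpa using h1
    have hRd : Ri *ᵥ d = 0 := by
      have := congrFun hMd
      funext j
      have h1 := this (Sum.inr j)
      rw [hM, Matrix.fromRows_mulVec] at h1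
      simpa using h1
    have hwv : w = Cᵀ *ᵥ v := by
      rw [hdel, hP, auxPmul] at hPd
      exact (neg_add_eq_zero.mp hPd).symm
    have hv0 : v ≠ 0 := by
      intro h0
      apply hd0
      rw [hdel, h0, hwv, h0, Matrix.mulVec_zero]
      funext x; cases x <;> simp
    -- choose ε
    set c : ℝ := (B.updateRow i v).det with hcdef
    have hD : B.det ≠ 0 := hBdet.ne_zero
    obtain ⟨ε, hε0, hεc⟩ : ∃ ε : ℝ, ε ≠ 0 ∧ B.det + ε * c ≠ 0 := by
      by_cases h : B.det + c = 0
      · refine ⟨-1, by norm_num, ?_⟩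
        have : c = -B.det := by linarith
        rw [this]; ring_nf; simpa using hD
      · exact ⟨1, one_ne_zero, by simpa using h⟩
    set Bt : Matrix (Fin n) (Fin n) ℝ := B.updateRow i (B i + ε • v) with hBtdef
    have hBtdet : Bt.det = B.det + ε * c := by
      rw [hBtdef, Matrix.det_updateRow_add, Matrix.det_updateRow_smul,
        Matrix.updateRow_eq_self]
    have hBtu : IsUnit Bt := by
      rw [Matrix.isUnit_iff_isUnit_det, hBtdet, isUnit_iff_ne_zero]
      exact hεc
    set At : Matrix (Fin n) (Fin m) ℝ := Bt * C with hAtdef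
    have hinv : Bt⁻¹ * At = C := by
      rw [hAtdef, Matrix.nonsing_inv_mul_cancel_left _ _
        ((Matrix.isUnit_iff_isUnit_det Bt).mp hBtu)]
    have hBti : Bt i = B i + ε • v := Matrix.updateRow_self
    have hrowt : (fromCols Bt At) i = (fromCols B A) i + ε • d := by
      rw [auxCol, auxCol, hAtdef, auxRow, hBti, ← hA, auxRow]
      funext x
      cases x with
      | inl k => simp [hv]
      | inr k =>
        simp only [Sum.elim_inr, Matrix.mulVec_add, Matrix.mulVec_smul, Pi.add_apply,
          Pi.smul_apply, smul_eq_mul, Pi.smul_apply]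
        rw [hdel]
        simp [hwv]
    have hres' : Ri *ᵥ (fromCols Bt At) i = ui := by
      rw [hrowt, Matrix.mulVec_add, hres, Matrix.mulVec_smul, hRd]
      simp
    have := hid Bt At hBtu (by rw [hinv]; exact hrank) (by rw [hinv]; exact hq) hres' (by rw [hinv])
    rw [hrowt] at this
    have h00 : ε • d = 0 := by
      have := congrArg (fun f => f - (fromCols B A) i) this
      simpa using this
    apply hv0
    funext k
    have := congrFun h00 (Sum.inl k)
    simp only [Pi.smul_apply, smul_eq_mul, Pi.zero_apply] at this
    have := mul_eq_zero.mp this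
    tauto
  · -- injective → identification
    intro hinj Bt At hBtu hrank' hq' hres' heq
    have hBtdet : IsUnit Bt.det := (Matrix.isUnit_iff_isUnit_det Bt).mp hBtu
    have hAt : Bt * C = At := by
      rw [← heq, Matrix.mul_nonsing_inv_cancel_left _ _ hBtdet]
    set d : Fin n ⊕ Fin m → ℝ := (fromCols Bt At) i - (fromCols B A) i with hd
    have hdel : d = Sum.elim (Bt i - B i) (Cᵀ *ᵥ (Bt i - B i)) := by
      rw [hd, auxCol, auxCol, ← hAt, ← hA, auxRow, auxRow]
      funext x; cases x <;> simp [Matrix.mulVec_sub]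
    have hMd : M *ᵥ d = 0 := by
      rw [hM, Matrix.fromRows_mulVec]
      have h1 : Pᵀ *ᵥ d = 0 := by
        rw [hdel, hP, auxPmul]
        simp
      have h2 : Ri *ᵥ d = 0 := by
        rw [hd, Matrix.mulVec_sub, hres, hres', sub_self]
      rw [h1, h2]
      funext x; cases x <;> simp
    have : d = 0 := by
      have := hinj (a₁ := d) (a₂ := 0) (by rw [hMd, Matrix.mulVec_zero])
      exact this
    have := sub_eq_zero.mp (hd ▸ this)
    exact this
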